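/- Let V be a finite-dimensional real vector space equipped with a nondegenerate alternating bilinear form ω, an inner product g, and a linear map J : V → V with J² = −id such that g(Jx,Jy) = g(x,y) and ω(x,y) = g(x,Jy) for all x,y ∈ V. Let L ⊆ V be a subspace and set L¹ := L ∩ L^ω, L² := the g-orthogonal complement of L¹ inside L, E¹ := J(L¹), and E² := (L + E¹)^ω. Then E¹ is g-orthogonal to L, E² ∩ (L + E¹) = {0}, and V decomposes as the internal direct sum V = E¹ ⊕ E² ⊕ L¹ ⊕ L². -/

import Mathlib

noncomputable section

variable {V : Type*} [AddCommGroup V] [Module ℝ V]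

/-- The `ω`-orthogonal complement `L^ω = {v ∈ V : ω(v,w) = 0 for all w ∈ L}`. -/
def symplCompl (ω : V →ₗ[ℝ] V →ₗ[ℝ] ℝ) (L : Submodule ℝ V) : Submodule ℝ V where
  carrier := {v | ∀ w ∈ L, ω v w = 0}
  zero_mem' := by intro w hw; simp
  add_mem' := by
    intro x y hx hy w hw
    rw [map_add, LinearMap.add_apply, hx w hw, hy w hw, add_zero]
  smul_mem' := by
    intro c x hx w hw
    rw [map_smul, LinearMap.smul_apply, hx w hw, smul_zero]

/-- The g-orthogonal complement of a subspace. -/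
def orthCompl (g : V →ₗ[ℝ] V →ₗ[ℝ] ℝ) (L : Submodule ℝ V) : Submodule ℝ V where
  carrier := {v | ∀ w ∈ L, g v w = 0}
  zero_mem' := by intro w hw; simp
  add_mem' := by
    intro x y hx hy w hw
    rw [map_add, LinearMap.add_apply, hx w hw, hy w hw, add_zero]
  smul_mem' := by
    intro c x hx w hw
    rw [map_smul, LinearMap.smul_apply, hx w hw, smul_zero]

/-- Pointwise decomposition of a fiber of a Lie algebroid induced by a
compatible triple `(ω, J, g)`, with `L` playing the role of the kernel of the anchor:
`E¹` is `g`-orthogonal to `L`, `E² ∩ (L + E¹) = 0`, and `V = E¹ ⊕ E² ⊕ L¹ ⊕ L²`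
as an internal direct sum. -/
theorem stmt3 [FiniteDimensional ℝ V]
    (ω : V →ₗ[ℝ] V →ₗ[ℝ] ℝ) (hω_alt : ∀ v, ω v v = 0)
    (hω_nondeg : ∀ v, (∀ w, ω v w = 0) → v = 0)
    (g : V →ₗ[ℝ] V →ₗ[ℝ] ℝ) (hg_symm : ∀ x y, g x y = g y x)
    (hg_posdef : ∀ x, x ≠ 0 → 0 < g x x)
    (J : V →ₗ[ℝ] V) (hJ : ∀ v, J (J v) = -v)
    (hJg : ∀ x y, g (J x) (J y) = g x y)
    (hωg : ∀ x y, ω x y = g x (J y))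
    (L : Submodule ℝ V)
    (L1 : Submodule ℝ V) (hL1 : L1 = L ⊓ symplCompl ω L)
    (L2 : Submodule ℝ V) (hL2 : L2 = L ⊓ orthCompl g L1)
    (E1 : Submodule ℝ V) (hE1 : E1 = L1.map J)
    (E2 : Submodule ℝ V) (hE2 : E2 = symplCompl ω (L ⊔ E1)) :
    (∀ x ∈ E1, ∀ y ∈ L, g x y = 0) ∧
    (E2 ⊓ (L ⊔ E1) = ⊥) ∧
    (E1 ⊔ E2 ⊔ L1 ⊔ L2 = ⊤) ∧
    (∀ a ∈ E1, ∀ b ∈ E2, ∀ c ∈ L1, ∀ d ∈ L2,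
      a + b + c + d = 0 → a = 0 ∧ b = 0 ∧ c = 0 ∧ d = 0) := by

  -- basic consequences
  have hω_anti : ∀ x y, ω x y = - ω y x := by
    intro x y
    have h := hω_alt (x + y)
    simp only [map_add, LinearMap.add_apply, hω_alt, zero_add, add_zero] at h
    linarith
  have hω_refl : ω.IsRefl := by
    intro x y h; rw [hω_anti, h, neg_zero]
  have hg_refl : g.IsRefl := by
    intro x y h; rw [hg_symm]; exact h
  have hωN : LinearMap.BilinForm.Nondegenerate ω :=
    hω_refl.nondegenerate_iff_separatingLeft.2 (fun v h => hω_nondeg v h)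
  have hg_zero : ∀ x : V, g x x = 0 → x = 0 := by
    intro x hx
    by_contra h
    exact absurd hx (hg_posdef x h).ne'
  have hmemS : ∀ (W : Submodule ℝ V) (v : V), v ∈ symplCompl ω W ↔ ∀ w ∈ W, ω v w = 0 :=
    fun _ _ => Iff.rfl
  have hmemO : ∀ (W : Submodule ℝ V) (v : V), v ∈ orthCompl g W ↔ ∀ w ∈ W, g v w = 0 :=
    fun _ _ => Iff.rfl
  have hsympl : ∀ W : Submodule ℝ V, symplCompl ω W = LinearMap.BilinForm.orthogonal ω W := by
    intro W
    ext v
    rw [hmemS, LinearMap.BilinForm.mem_orthogonal_iff]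
    constructor
    · intro h n hn; exact hω_refl v n (h n hn)
    · intro h n hn; exact hω_refl n v (h n hn)
  have horthg : ∀ W : Submodule ℝ V, orthCompl g W = LinearMap.BilinForm.orthogonal g W := by
    intro W
    ext v
    rw [hmemO, LinearMap.BilinForm.mem_orthogonal_iff]
    constructor
    · intro h n hn; exact hg_refl v n (h n hn)
    · intro h n hn; exact hg_refl n v (h n hn)
  have hL1L : L1 ≤ L := hL1 ▸ inf_le_left
  have hL2L : L2 ≤ L := hL2 ▸ inf_le_left
  -- Claim 1 : E1 ⊥_g L
  have claim1 : ∀ x ∈ E1, ∀ y ∈ L, g x y = 0 := by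
    intro x hx y hy
    rw [hE1, Submodule.mem_map] at hx
    obtain ⟨u, hu, rfl⟩ := hx
    rw [hL1, Submodule.mem_inf] at hu
    have h1 : g (J (J u)) (J y) = g (J u) y := hJg (J u) y
    rw [hJ u] at h1
    have h2 : g (-u) (J y) = - g u (J y) := by rw [map_neg, LinearMap.neg_apply]
    have h3 : g u (J y) = ω u y := (hωg u y).symm
    rw [← h1, h2, h3, hu.2 y hy, neg_zero]
  -- Claim 2 : E2 ⊓ (L ⊔ E1) = ⊥  (pointwise key lemma)
  have key : ∀ v, v ∈ E2 → v ∈ L ⊔ E1 → v = 0 := by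
    intro v hv2 hv1
    have hv2' : ∀ w ∈ L ⊔ E1, ω v w = 0 := by
      intro w hw; exact (hmemS _ v).1 (hE2 ▸ hv2) w hw
    obtain ⟨y, hy, e, he, rfl⟩ := Submodule.mem_sup.1 hv1
    rw [hE1, Submodule.mem_map] at he
    obtain ⟨x, hx, rfl⟩ := he
    have hxL : x ∈ L := hL1 ▸ inf_le_left <| hx
    have hxω : x ∈ symplCompl ω L := (hL1 ▸ inf_le_right : L1 ≤ symplCompl ω L) hx
    -- step A : x = 0
    have hA : x = 0 := by
      have h0 : ω (y + J x) x = 0 :=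
        hv2' x (Submodule.mem_sup_left hxL)
      have hyx : ω y x = 0 := hω_refl x y (hxω y hy)
      have hJxx : ω (J x) x = g x x := by
        rw [hωg]; exact hJg x x
      have hsplit : ω (y + J x) x = ω y x + ω (J x) x := by
        rw [map_add, LinearMap.add_apply]
      apply hg_zero
      rw [hsplit, hyx, hJxx, zero_add] at h0
      exact h0
    subst hA
    rw [map_zero, add_zero] at hv2' ⊢
    -- step B : y ∈ L1
    have hyL1 : y ∈ L1 := by
      rw [hL1, Submodule.mem_inf]
      exact ⟨hy, fun w hw => hv2' w (Submodule.mem_sup_left hw)⟩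
    -- step C : y = 0
    have hJyE1 : J y ∈ E1 := hE1 ▸ Submodule.mem_map_of_mem hyL1
    have h0 : ω y (J y) = 0 := hv2' (J y) (Submodule.mem_sup_right hJyE1)
    have : ω y (J y) = - g y y := by rw [hωg, hJ, map_neg]
    apply hg_zero
    rw [this] at h0
    linarith
  have claim2 : E2 ⊓ (L ⊔ E1) = ⊥ := by
    rw [eq_bot_iff]
    intro v hv
    rw [Submodule.mem_inf] at hv
    exact (Submodule.mem_bot ℝ).2 (key v hv.1 hv.2)
  -- L1 ⊔ L2 = L
  have hrestr : ((LinearMap.BilinForm.restrict g L1).Nondegenerate) := by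
    refine ⟨?_, ?_⟩
    all_goals
      intro ⟨x, hx⟩ h
      have := h ⟨x, hx⟩
      rw [LinearMap.BilinForm.restrict_apply] at this
      have hx0 : x = 0 := hg_zero x this
      exact Subtype.ext hx0
  have hcomplL1 : IsCompl L1 (LinearMap.BilinForm.orthogonal g L1) :=
    LinearMap.BilinForm.isCompl_orthogonal_of_restrict_nondegenerate hg_refl hrestr
  have hL12 : L1 ⊔ L2 = L := by
    rw [sup_comm, hL2, horthg, inf_sup_assoc_of_le _ hL1L, sup_comm,
      hcomplL1.sup_eq_top, inf_top_eq]
  -- (L ⊔ E1) ⊔ E2 = ⊤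
  have hdisj : Disjoint (L ⊔ E1) (LinearMap.BilinForm.orthogonal ω (L ⊔ E1)) := by
    rw [disjoint_iff, ← hsympl, ← hE2, inf_comm]
    exact claim2
  have hcompl : IsCompl (L ⊔ E1) (LinearMap.BilinForm.orthogonal ω (L ⊔ E1)) :=
    (LinearMap.BilinForm.isCompl_orthogonal_iff_disjoint hω_refl).2 hdisj
  have hsup : (L ⊔ E1) ⊔ E2 = ⊤ := by
    rw [hE2, hsympl]; exact hcompl.sup_eq_top
  refine ⟨claim1, claim2, ?_, ?_⟩
  · have h1 : E1 ≤ E1 ⊔ E2 ⊔ L1 ⊔ L2 :=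
      ((le_sup_left : E1 ≤ E1 ⊔ E2).trans
        (le_sup_left : E1 ⊔ E2 ≤ E1 ⊔ E2 ⊔ L1)).trans
        (le_sup_left : E1 ⊔ E2 ⊔ L1 ≤ E1 ⊔ E2 ⊔ L1 ⊔ L2)
    have h2 : E2 ≤ E1 ⊔ E2 ⊔ L1 ⊔ L2 :=
      ((le_sup_right : E2 ≤ E1 ⊔ E2).trans
        (le_sup_left : E1 ⊔ E2 ≤ E1 ⊔ E2 ⊔ L1)).trans
        (le_sup_left : E1 ⊔ E2 ⊔ L1 ≤ E1 ⊔ E2 ⊔ L1 ⊔ L2)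
    have h3 : L1 ≤ E1 ⊔ E2 ⊔ L1 ⊔ L2 :=
      (le_sup_right : L1 ≤ E1 ⊔ E2 ⊔ L1).trans
        (le_sup_left : E1 ⊔ E2 ⊔ L1 ≤ E1 ⊔ E2 ⊔ L1 ⊔ L2)
    have h4 : L2 ≤ E1 ⊔ E2 ⊔ L1 ⊔ L2 := le_sup_right
    have hLX : L ≤ E1 ⊔ E2 ⊔ L1 ⊔ L2 := hL12 ▸ sup_le h3 h4
    rw [eq_top_iff, ← hsup]
    exact sup_le (sup_le hLX h1) h2
  · intro a ha b hb c hc d hd habcd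
    have hb0 : b = 0 := by
      apply key b hb
      have hb' : b + (a + c + d) = 0 := by rw [← habcd]; abel
      have : b = -(a + c + d) := eq_neg_of_add_eq_zero_left hb'
      rw [this]
      refine Submodule.neg_mem _ (Submodule.add_mem _ (Submodule.add_mem _ ?_ ?_) ?_)
      · exact Submodule.mem_sup_right ha
      · exact Submodule.mem_sup_left (hL1L hc)
      · exact Submodule.mem_sup_left (hL2L hd)
    subst hb0
    rw [add_zero] at habcd
    have ha0 : a = 0 := by
      have haL : a ∈ L := by
        have ha' : a + (c + d) = 0 := by rw [← habcd]; abel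
        have : a = -(c + d) := eq_neg_of_add_eq_zero_left ha'
        rw [this]
        exact Submodule.neg_mem _ (Submodule.add_mem _ (hL1L hc) (hL2L hd))
      exact hg_zero a (claim1 a ha a haL)
    subst ha0
    rw [zero_add] at habcd
    have hdc : g d c = 0 := (hmemO L1 d).1 ((hL2 ▸ inf_le_right : L2 ≤ orthCompl g L1) hd) c hc
    have hc0 : c = 0 := by
      apply hg_zero
      have : c = -d := eq_neg_of_add_eq_zero_left habcd
      calc g c c = g c (-d) := by rw [← this]
        _ = - g c d := by rw [map_neg]
        _ = - g d c := by rw [hg_symm]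
        _ = 0 := by rw [hdc, neg_zero]
    subst hc0
    rw [zero_add] at habcd
    exact ⟨rfl, rfl, rfl, habcd⟩
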